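/- Interpolation capability of TELM (full statement, deterministic version): given N pairwise distinct input tensors X₁,…,X_N ∈ ℝ^{I₁×⋯×I_K} and any labels t₁,…,t_N ∈ ℝ, suppose weights W₁,…,W_N (tensors of the same shape) are chosen so that for every j the N real numbers ⟨W_j, X_i⟩, i = 1,…,N, are pairwise distinct. Then there exist biases b₁,…,b_N ∈ ℝ and output weights β ∈ ℝ^N such that ∑_{j=1}^N β_j σ(⟨W_j, X_i⟩ + b_j) = t_i for all i, where σ is the sigmoid. -/

import Mathlib

noncomputable def sigmoid : ℝ → ℝ := fun x => 1 / (1 + Real.exp (-x))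

open Polynomial Finset in
lemma coeffs_zero {n : ℕ} (d : Fin n → ℝ) (hd : Function.Injective d)
    (hd0 : ∀ i, 0 < d i) (c : Fin n → ℝ)
    (h : ∀ t : ℝ, 0 < t → ∑ i, c i / (1 + d i * t) = 0) : c = 0 := by
  set P : ℝ[X] := ∑ i, C (c i) * ∏ k ∈ univ.erase i, (1 + C (d k) * X) with hP
  have heval : ∀ t : ℝ, P.eval t = ∑ i, c i * ∏ k ∈ univ.erase i, (1 + d k * t) := by
    intro t; simp [hP, eval_finset_sum, eval_prod]
  have hroot : ∀ t : ℝ, 0 < t → P.eval t = 0 := by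
    intro t ht
    have key : ∀ i : Fin n, c i * ∏ k ∈ univ.erase i, (1 + d k * t)
        = (c i / (1 + d i * t)) * ∏ k, (1 + d k * t) := by
      intro i
      have hne : (1 + d i * t) ≠ 0 := by
        have := mul_pos (hd0 i) ht; positivity
      rw [← Finset.mul_prod_erase univ (fun k => 1 + d k * t) (mem_univ i)]
      simp only [← mul_assoc, div_mul_cancel₀ _ hne]
    rw [heval]
    calc ∑ i, c i * ∏ k ∈ univ.erase i, (1 + d k * t)
        = ∑ i, (c i / (1 + d i * t)) * ∏ k, (1 + d k * t) :=
          Finset.sum_congr rfl fun i _ => key i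
      _ = (∑ i, c i / (1 + d i * t)) * ∏ k, (1 + d k * t) := by rw [Finset.sum_mul]
      _ = 0 := by rw [h t ht, zero_mul]
  have hP0 : P = 0 := by
    apply P.eq_zero_of_infinite_isRoot
    exact Set.Infinite.mono (s := Set.Ioi (0:ℝ)) (fun t ht => hroot t ht) (Set.Ioi_infinite 0)
  funext i
  have hev := heval (-(d i)⁻¹)
  rw [hP0, eval_zero] at hev
  have hsum : ∀ j ∈ univ.erase i,
      c j * ∏ k ∈ univ.erase j, (1 + d k * -(d i)⁻¹) = 0 := by
    intro j hj
    have hji : i ∈ univ.erase j := by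
      simp only [mem_erase, mem_univ, and_true] at hj ⊢
      exact fun h' => hj h'.symm
    rw [Finset.prod_eq_zero hji, mul_zero]
    field_simp [(hd0 i).ne']
    norm_num
  rw [← Finset.add_sum_erase univ _ (mem_univ i), Finset.sum_eq_zero hsum, add_zero] at hev
  have hprod : ∏ k ∈ univ.erase i, (1 + d k * -(d i)⁻¹) ≠ 0 := by
    rw [Finset.prod_ne_zero_iff]
    intro k hk
    simp only [mem_erase, mem_univ, and_true] at hk
    intro hzero
    apply hk
    apply hd
    have hdi := (hd0 i).ne'
    field_simp at hzero
    linarith [hzero]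
  rcases mul_eq_zero.mp hev.symm with h1 | h1
  · exact h1
  · exact absurd (by simpa using h1) hprod

open Finset in
lemma exists_sigmoid_not_mem {n : ℕ} (ψ : Fin n → ℝ) (hψ : Function.Injective ψ)
    (p : Submodule ℝ (Fin n → ℝ)) (hp : p < ⊤) :
    ∃ y : ℝ, (fun i => sigmoid (ψ i + y)) ∉ p := by
  by_contra hcon
  push_neg at hcon
  obtain ⟨f, hf0, hfbot⟩ := p.exists_dual_map_eq_bot_of_lt_top hp inferInstance
  set c : Fin n → ℝ := fun i => f (fun j => if i = j then 1 else 0) with hc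
  have hfx : ∀ x : Fin n → ℝ, f x = ∑ i, x i * c i := by
    intro x
    rw [LinearMap.pi_apply_eq_sum_univ f x]
    simp [hc, smul_eq_mul]
  set d : Fin n → ℝ := fun i => Real.exp (-ψ i) with hdd
  have hdinj : Function.Injective d := by
    intro a b hab
    exact hψ (neg_injective (Real.exp_injective hab))
  have hd0 : ∀ i, 0 < d i := fun i => Real.exp_pos _
  have hkey : ∀ t : ℝ, 0 < t → ∑ i, c i / (1 + d i * t) = 0 := by
    intro t ht
    have hy := hcon (-Real.log t)
    have hfz : f (fun i => sigmoid (ψ i + -Real.log t)) = 0 := by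
      have : f (fun i => sigmoid (ψ i + -Real.log t)) ∈ p.map f := ⟨_, hy, rfl⟩
      rwa [hfbot, Submodule.mem_bot] at this
    rw [hfx] at hfz
    rw [← hfz]
    apply Finset.sum_congr rfl
    intro i _
    have : sigmoid (ψ i + -Real.log t) = 1 / (1 + d i * t) := by
      simp only [sigmoid, hdd]
      rw [neg_add, Real.exp_add, neg_neg, Real.exp_log ht]
    rw [this]
    ring
  have hc0 : c = 0 := coeffs_zero d hdinj hd0 c hkey
  apply hf0
  refine LinearMap.ext fun x => ?_
  rw [hfx, hc0]
  simp

open Finset in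
lemma exists_linIndep {n N : ℕ} (hn : n ≤ N) (S : Fin n → Set (Fin N → ℝ))
    (hS : ∀ j, ∀ p : Submodule ℝ (Fin N → ℝ), p < ⊤ → ∃ v ∈ S j, v ∉ p) :
    ∃ v : Fin n → (Fin N → ℝ), (∀ j, v j ∈ S j) ∧ LinearIndependent ℝ v := by
  induction n with
  | zero => exact ⟨Fin.elim0, fun j => j.elim0, linearIndependent_empty_type⟩
  | succ m ih =>
    obtain ⟨v, hv, hli⟩ := ih (Nat.le_of_succ_le hn) (fun j => S j.castSucc)
      (fun j => hS j.castSucc)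
    set p := Submodule.span ℝ (Set.range v) with hpdef
    have hplt : p < ⊤ := by
      rw [lt_top_iff_ne_top]
      intro htop
      have h1 : Module.finrank ℝ p ≤ m := by
        simpa [Set.finrank, hpdef] using finrank_range_le_card v
      have h2 : Module.finrank ℝ (Fin N → ℝ) = N := by simp
      rw [htop] at h1
      simp only [finrank_top, h2] at h1
      omega
    obtain ⟨x, hxS, hxp⟩ := hS (Fin.last m) p hplt
    refine ⟨Fin.snoc v x, ?_, ?_⟩
    · intro j
      refine Fin.lastCases ?_ ?_ j
      · simpa using hxS
      · intro k; simpa using hv k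
    · rw [linearIndependent_fin_snoc]
      exact ⟨hli, hxp⟩

theorem telm_interpolation_capability {N M : ℕ}
    (X : Fin N → (Fin M → ℝ)) (hX : Function.Injective X)
    (t : Fin N → ℝ)
    (W : Fin N → (Fin M → ℝ))
    (hW : ∀ j : Fin N, ∀ i i' : Fin N, i ≠ i' →
      dotProduct (W j) (X i) ≠ dotProduct (W j) (X i')) :
    ∃ (b : Fin N → ℝ) (β : Fin N → ℝ),
      ∀ i : Fin N,
        ∑ j, β j * sigmoid (dotProduct (W j) (X i) + b j) = t i := by
  rcases Nat.eq_zero_or_pos N with hN | hN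
  · subst hN
    exact ⟨0, 0, fun i => i.elim0⟩
  haveI : Nonempty (Fin N) := Fin.pos_iff_nonempty.mp hN
  set S : Fin N → Set (Fin N → ℝ) :=
    fun j => Set.range (fun y : ℝ => fun i => sigmoid (dotProduct (W j) (X i) + y))
    with hSdef
  have hS : ∀ j, ∀ p : Submodule ℝ (Fin N → ℝ), p < ⊤ → ∃ v ∈ S j, v ∉ p := by
    intro j p hp
    have hinj : Function.Injective (fun i => dotProduct (W j) (X i)) := by
      intro a b hab
      by_contra hne
      exact hW j a b hne hab
    obtain ⟨y, hy⟩ := exists_sigmoid_not_mem _ hinj p hp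
    exact ⟨_, ⟨y, rfl⟩, hy⟩
  obtain ⟨v, hv, hli⟩ := exists_linIndep le_rfl S hS
  choose b hb using fun j => hv j
  have hcard : Fintype.card (Fin N) = Module.finrank ℝ (Fin N → ℝ) := by simp
  let B := basisOfLinearIndependentOfCardEqFinrank hli hcard
  refine ⟨b, fun j => B.repr t j, fun i => ?_⟩
  have hrepr := B.sum_repr t
  have hBj : ∀ j, B j = v j := fun j =>
    congrFun (coe_basisOfLinearIndependentOfCardEqFinrank hli hcard) j
  have hvb : ∀ j i', v j i' = sigmoid (dotProduct (W j) (X i') + b j) := by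
    intro j i'
    exact (congrFun (hb j) i').symm
  calc ∑ j, B.repr t j * sigmoid (dotProduct (W j) (X i) + b j)
      = ∑ j, B.repr t j * (B j) i := by
        refine Finset.sum_congr rfl fun j _ => ?_
        rw [hBj j, hvb j i]
    _ = (∑ j, B.repr t j • B j) i := by
        rw [Finset.sum_apply]
        exact Finset.sum_congr rfl fun j _ => rfl
    _ = t i := by rw [hrepr]
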